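/- Under the hyperbolic law of cosines with λ > 0: for s, t with 2R < s ≤ t and θ ∈ (0, π], if e^{λ s}·θ ≥ 1 then the number d ≥ 0 determined by cosh(λ d) = cosh(λ s) cosh(λ t) − sinh(λ s) sinh(λ t) cos θ satisfies d ≤ s + t + (2/λ)·log θ + c₁ for a constant c₁ > 0 depending only on λ. -/

import Mathlib

set_option maxHeartbeats 1000000 in
theorem stmt18 (lam : ℝ) (hlam : 0 < lam) :
    ∃ c₁ > (0 : ℝ), ∀ R s t θ d : ℝ, 0 < R → 2 * R < s → s ≤ t →
      0 < θ → θ ≤ Real.pi → 0 ≤ d →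
      1 ≤ Real.exp (lam * s) * θ →
      Real.cosh (lam * d) =
        Real.cosh (lam * s) * Real.cosh (lam * t)
          - Real.sinh (lam * s) * Real.sinh (lam * t) * Real.cos θ →
      d ≤ s + t + (2 / lam) * Real.log θ + c₁ := by
  refine ⟨1 / lam, by positivity, fun R s t θ d hR hs hst hθ hθπ hd hexp hlaw => ?_⟩
  have hθ' : (0 : ℝ) < θ := hθ
  -- key: exp(lam d) ≤ (9/4) * exp(lam (s+t)) * θ^2
  have h1 : Real.cosh (lam * d)
      = Real.cosh (lam * (t - s)) + Real.sinh (lam * s) * Real.sinh (lam * t) * (1 - Real.cos θ) := by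
    rw [hlaw, mul_sub, Real.cosh_sub]; ring
  have hcos : 1 - Real.cos θ ≤ θ ^ 2 / 2 := by
    have := Real.one_sub_sq_div_two_le_cos (x := θ); linarith
  have hcosnn : 0 ≤ 1 - Real.cos θ := by have := Real.cos_le_one θ; linarith
  have hs0 : 0 ≤ lam * s := by nlinarith
  have ht0 : 0 ≤ lam * t := by nlinarith
  have hsinh : ∀ x : ℝ, Real.sinh x ≤ Real.exp x / 2 := fun x => by
    rw [Real.sinh_eq]; have := (Real.exp_pos (-x)).le; linarith
  have hsinhnn : 0 ≤ Real.sinh (lam * s) := Real.sinh_nonneg_iff.mpr hs0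
  have hsinhnn' : 0 ≤ Real.sinh (lam * t) := Real.sinh_nonneg_iff.mpr ht0
  have hprod : Real.sinh (lam * s) * Real.sinh (lam * t) * (1 - Real.cos θ)
      ≤ (Real.exp (lam * s) / 2) * (Real.exp (lam * t) / 2) * (θ ^ 2 / 2) := by
    have h2 := hsinh (lam * s)
    have h3 := hsinh (lam * t)
    have e1 := (Real.exp_pos (lam * s)).le
    have e2 := (Real.exp_pos (lam * t)).le
    nlinarith [mul_le_mul h2 h3 hsinhnn' (by positivity),
      mul_le_mul_of_nonneg_left hcos (mul_nonneg hsinhnn hsinhnn')]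
  -- exp(-lam s) ≤ θ
  have hes : Real.exp (-(lam * s)) ≤ θ := by
    rw [Real.exp_neg]
    rw [inv_le_iff_one_le_mul₀ (Real.exp_pos _)]
    linarith [hexp]
  have hcoshts : Real.cosh (lam * (t - s)) ≤ Real.exp (lam * (s + t)) * θ ^ 2 := by
    have h4 : Real.cosh (lam * (t - s)) ≤ Real.exp (lam * (t - s)) := by
      have := Real.sinh_nonneg_iff.mpr (mul_nonneg hlam.le (by linarith : (0:ℝ) ≤ t - s))
      have := Real.cosh_eq (lam * (t-s)); have := Real.sinh_eq (lam * (t-s))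
      have := (Real.exp_pos (-(lam * (t-s)))).le
      nlinarith
    have h5 : Real.exp (lam * (t - s)) = Real.exp (lam * (s + t)) * (Real.exp (-(lam*s)))^2 := by
      rw [← Real.exp_nat_mul, ← Real.exp_add]; ring_nf
    have h6 : (Real.exp (-(lam*s)))^2 ≤ θ^2 := by
      have := (Real.exp_pos (-(lam*s))).le
      nlinarith
    calc Real.cosh (lam * (t - s)) ≤ Real.exp (lam * (t-s)) := h4
      _ = Real.exp (lam * (s + t)) * (Real.exp (-(lam*s)))^2 := h5
      _ ≤ Real.exp (lam * (s + t)) * θ^2 :=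
          mul_le_mul_of_nonneg_left h6 (Real.exp_pos _).le
  have hcoshd : Real.cosh (lam * d) ≤ (9/8) * Real.exp (lam * (s + t)) * θ ^ 2 := by
    rw [h1]
    have : (Real.exp (lam * s) / 2) * (Real.exp (lam * t) / 2) * (θ ^ 2 / 2)
        = Real.exp (lam * (s+t)) * θ^2 / 8 := by
      rw [mul_add, Real.exp_add]; ring
    nlinarith
  have hexpd : Real.exp (lam * d) ≤ (9/4) * Real.exp (lam * (s + t)) * θ ^ 2 := by
    have h7 : Real.exp (lam * d) ≤ 2 * Real.cosh (lam * d) := by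
      have := Real.cosh_eq (lam * d)
      have := (Real.exp_pos (-(lam * d))).le
      nlinarith
    linarith
  -- RHS exp
  have hrhs : (9/4 : ℝ) * Real.exp (lam * (s + t)) * θ ^ 2
      ≤ Real.exp (lam * (s + t + (2 / lam) * Real.log θ + 1 / lam)) := by
    have : lam * (s + t + (2 / lam) * Real.log θ + 1 / lam)
        = lam * (s + t) + 2 * Real.log θ + 1 := by field_simp
    rw [this, Real.exp_add, Real.exp_add]
    have hlog : Real.exp (2 * Real.log θ) = θ ^ 2 := by
      have h2 : (2:ℝ) * Real.log θ = Real.log θ + Real.log θ := by ring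
      rw [h2, Real.exp_add, Real.exp_log hθ]; ring
    rw [hlog]
    have h9 : (9/4 : ℝ) ≤ Real.exp 1 := by
      have := Real.add_one_le_exp (1:ℝ)
      have h := Real.exp_one_gt_d9
      linarith
    have hEθ : (0:ℝ) ≤ Real.exp (lam*(s+t)) * θ^2 := by positivity
    nlinarith [mul_le_mul_of_nonneg_right h9 hEθ]
  have := hexpd.trans hrhs
  have hle := Real.exp_le_exp.mp this
  have := le_of_mul_le_mul_left hle hlam
  linarith
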